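/- (Combinatorial Nullstellensatz) Let F be a field and P ∈ F[x1,…,xn] a polynomial of total degree k1 + k2 + ⋯ + kn, where the k_i are non-negative integers and the coefficient of x1^{k1}⋯xn^{kn} in P is nonzero. If S1,…,Sn ⊆ F are finite sets with |S_i| > k_i for each i, then there exist s_i ∈ S_i with P(s1,…,sn) ≠ 0. -/
import Mathlib


open Polynomial Finset in
lemma key1 {F : Type*} [Field F] [DecidableEq F] (S : Finset F) (d m : ℕ)
    (hcard : S.card = d + 1) (hm : m ≤ d) :
    ∑ x ∈ S, x ^ m * (∏ y ∈ S.erase x, (x - y))⁻¹ = if m = d then 1 else 0 := by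
  have hinj : Set.InjOn (id : F → F) S := Function.injective_id.injOn
  have hdeg : (X ^ m : F[X]).degree < S.card := by
    rw [degree_X_pow, hcard]
    exact_mod_cast Nat.lt_succ_of_le hm
  have h := Lagrange.eq_interpolate hinj hdeg
  have hc := congrArg (fun p => Polynomial.coeff p d) h
  simp only [Lagrange.interpolate_apply, Polynomial.finset_sum_coeff, coeff_X_pow,
    Polynomial.coeff_C_mul, id_eq, eval_pow, eval_X] at hc
  have hbasis : ∀ x ∈ S, (Lagrange.basis S (id : F → F) x).coeff d
      = (∏ y ∈ S.erase x, (x - y))⁻¹ := by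
    intro x hx
    have hnd : (Lagrange.basis S (id : F → F) x).natDegree = d := by
      rw [Lagrange.natDegree_basis hinj hx, hcard]; rfl
    rw [← hnd, ← Polynomial.leadingCoeff, Lagrange.basis, Polynomial.leadingCoeff_prod,
      ← prod_inv_distrib]
    refine prod_congr rfl fun y hy => ?_
    rw [Lagrange.basisDivisor, leadingCoeff_mul, leadingCoeff_C, leadingCoeff_X_sub_C, mul_one]
    rfl
  rw [show (if m = d then (1:F) else 0) = if d = m then 1 else 0 by simp [eq_comm], hc]
  exact sum_congr rfl fun x hx => by rw [hbasis x hx]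


/-- Combinatorial Nullstellensatz (Alon): if `deg P = Σ k_i`, the coefficient of
`x_1^{k_1} ⋯ x_n^{k_n}` in `P` is nonzero, and `|S_i| > k_i`, then `P` does not
vanish on `S_1 × ⋯ × S_n`. -/
theorem combinatorial_nullstellensatz {F : Type*} [Field F] {n : ℕ}
    (P : MvPolynomial (Fin n) F) (k : Fin n → ℕ)
    (hdeg : P.totalDegree = ∑ i, k i)
    (hcoeff : MvPolynomial.coeff (Finsupp.equivFunOnFinite.symm k) P ≠ 0)
    (S : Fin n → Finset F) (hS : ∀ i, k i < (S i).card) :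
    ∃ s : Fin n → F, (∀ i, s i ∈ S i) ∧ MvPolynomial.eval s P ≠ 0 := by
  classical
  choose T hTS hTcard using fun i => Finset.exists_subset_card_eq (hS i)
  set kf := Finsupp.equivFunOnFinite.symm k with hkf
  have hkfi : ∀ i, kf i = k i := fun i => rfl
  by_contra hcon
  push_neg at hcon
  have hzero : ∀ s ∈ Fintype.piFinset T, MvPolynomial.eval s P = 0 := fun s hs =>
    hcon s fun i => hTS i (Fintype.mem_piFinset.mp hs i)
  have hterm : ∀ m ∈ P.support,
      MvPolynomial.coeff m P * ∏ i, ∑ x ∈ T i, x ^ m i * (∏ y ∈ (T i).erase x, (x - y))⁻¹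
      = if m = kf then MvPolynomial.coeff m P else 0 := by
    intro m hm
    by_cases hlt : ∃ i, m i < k i
    · obtain ⟨i, hi⟩ := hlt
      have h0 : ∑ x ∈ T i, x ^ m i * (∏ y ∈ (T i).erase x, (x - y))⁻¹ = 0 := by
        rw [key1 (T i) (k i) (m i) (hTcard i) hi.le, if_neg hi.ne]
      rw [Finset.prod_eq_zero (Finset.mem_univ i) h0, mul_zero, if_neg]
      intro hmk
      exact absurd (hmk ▸ hkfi i) hi.ne
    · push_neg at hlt
      have hmsum : (m.sum fun _ e => e) = ∑ i, m i :=
        Finsupp.sum_fintype _ _ (fun _ => rfl)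
      have hsum : ∑ i, m i ≤ ∑ i, k i := by
        rw [← hdeg, ← hmsum]; exact MvPolynomial.le_totalDegree hm
      have hsum2 : ∑ i, k i = ∑ i, m i :=
        le_antisymm (Finset.sum_le_sum fun i _ => hlt i) hsum
      have heq : ∀ i, m i = k i := fun i =>
        ((Finset.sum_eq_sum_iff_of_le fun i _ => hlt i).mp hsum2 i (Finset.mem_univ i)).symm
      have hmk : m = kf := Finsupp.ext fun i => (heq i).trans (hkfi i).symm
      rw [if_pos hmk]
      have h1 : ∀ i : Fin n, ∑ x ∈ T i, x ^ m i * (∏ y ∈ (T i).erase x, (x - y))⁻¹ = 1 := by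
        intro i
        rw [heq i, key1 (T i) (k i) (k i) (hTcard i) le_rfl, if_pos rfl]
      rw [Finset.prod_eq_one fun i _ => h1 i, mul_one]
  have hmain : (0:F) = MvPolynomial.coeff kf P := by
    calc (0:F) = ∑ s ∈ Fintype.piFinset T,
          MvPolynomial.eval s P * ∏ i, (∏ y ∈ (T i).erase (s i), (s i - y))⁻¹ := by
          rw [Finset.sum_congr rfl fun s hs => by rw [hzero s hs, zero_mul]]
          simp
      _ = ∑ s ∈ Fintype.piFinset T, ∑ m ∈ P.support,
          MvPolynomial.coeff m P * ∏ i, (s i ^ m i * (∏ y ∈ (T i).erase (s i), (s i - y))⁻¹) := by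
          refine Finset.sum_congr rfl fun s hs => ?_
          rw [MvPolynomial.eval_eq', Finset.sum_mul]
          exact Finset.sum_congr rfl fun m hm => by rw [mul_assoc, ← Finset.prod_mul_distrib]
      _ = ∑ m ∈ P.support, MvPolynomial.coeff m P *
          ∏ i, ∑ x ∈ T i, x ^ m i * (∏ y ∈ (T i).erase x, (x - y))⁻¹ := by
          rw [Finset.sum_comm]
          refine Finset.sum_congr rfl fun m hm => ?_
          rw [← Finset.mul_sum]
          congr 1
          exact (Finset.prod_univ_sum T fun i x => x ^ m i *
            (∏ y ∈ (T i).erase x, (x - y))⁻¹).symm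
      _ = MvPolynomial.coeff kf P := by
          rw [Finset.sum_congr rfl hterm, Finset.sum_ite_eq' P.support kf
            (fun m => MvPolynomial.coeff m P)]
          split_ifs with h
          · rfl
          · exact (MvPolynomial.notMem_support_iff.mp h).symm
  exact hcoeff hmain.symm
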